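/- Comparison of solutions of the singular square-root equation: let y₀, b, σ > 0, let B : [0,∞) → ℝ be continuous with B(0) = 0, and let 0 < ε₂ < ε₁. Suppose Y₁, Y₂ : [0,∞) → ℝ are continuous, strictly positive, and satisfy E(ε₁) and E(ε₂) respectively (with the same y₀, b, σ, B). Then Y₂(t) ≤ Y₁(t) for all t ≥ 0. -/

import Mathlib

/-- A continuous, strictly positive `Y : [0, ∞) → ℝ` solves the singular equation `E(ε)`
if `Y t = y₀ + (1/2) ∫₀ᵗ (ε / Y s - b * Y s) ds + (σ/2) B t` for all `t ≥ 0`. -/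
def SolvesE (y₀ b σ : ℝ) (B : ℝ → ℝ) (ε : ℝ) (Y : ℝ → ℝ) : Prop :=
  ContinuousOn Y (Set.Ici 0) ∧ (∀ t, 0 ≤ t → 0 < Y t) ∧
    ∀ t, 0 ≤ t →
      Y t = y₀ + (1 / 2) * (∫ s in (0:ℝ)..t, (ε / Y s - b * Y s)) + (σ / 2) * B t

/-- Comparison of solutions of the singular square-root equation. -/
theorem stmt_2 (y₀ b σ : ℝ) (hy₀ : 0 < y₀) (hb : 0 < b) (hσ : 0 < σ)
    (B : ℝ → ℝ) (hBc : ContinuousOn B (Set.Ici 0)) (hB0 : B 0 = 0)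
    (ε₁ ε₂ : ℝ) (hε₂ : 0 < ε₂) (hε : ε₂ < ε₁)
    (Y₁ Y₂ : ℝ → ℝ) (h₁ : SolvesE y₀ b σ B ε₁ Y₁) (h₂ : SolvesE y₀ b σ B ε₂ Y₂) :
    ∀ t, 0 ≤ t → Y₂ t ≤ Y₁ t := by
  obtain ⟨hc₁, hp₁, he₁⟩ := h₁
  obtain ⟨hc₂, hp₂, he₂⟩ := h₂
  set f₁ : ℝ → ℝ := fun s => ε₁ / Y₁ s - b * Y₁ s with hf₁
  set f₂ : ℝ → ℝ := fun s => ε₂ / Y₂ s - b * Y₂ s with hf₂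
  have hcf₁ : ContinuousOn f₁ (Set.Ici 0) :=
    (continuousOn_const.div hc₁ (fun x hx => (hp₁ x hx).ne')).sub
      (continuousOn_const.mul hc₁)
  have hcf₂ : ContinuousOn f₂ (Set.Ici 0) :=
    (continuousOn_const.div hc₂ (fun x hx => (hp₂ x hx).ne')).sub
      (continuousOn_const.mul hc₂)
  have hint : ∀ f : ℝ → ℝ, ContinuousOn f (Set.Ici 0) → ∀ a b' : ℝ, 0 ≤ a → 0 ≤ b' →
      IntervalIntegrable f MeasureTheory.volume a b' := by
    intro f hf a b' ha hb'
    apply ContinuousOn.intervalIntegrable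
    apply hf.mono
    intro x hx
    exact le_trans (le_min ha hb') hx.1
  intro t₀ ht₀
  by_contra hlt
  push_neg at hlt
  have hY0 : Y₁ 0 = Y₂ 0 := by
    have e1 := he₁ 0 le_rfl
    have e2 := he₂ 0 le_rfl
    simp [intervalIntegral.integral_same, hB0] at e1 e2
    rw [e1, e2]
  set g : ℝ → ℝ := fun t => Y₁ (max t 0) - Y₂ (max t 0) with hg
  have hgc : Continuous g := by
    have h1 : Continuous fun t : ℝ => Y₁ (max t 0) :=
      hc₁.comp_continuous (continuous_id.max continuous_const) (fun x => Set.mem_Ici.mpr (le_max_right _ _))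
    have h2 : Continuous fun t : ℝ => Y₂ (max t 0) :=
      hc₂.comp_continuous (continuous_id.max continuous_const) (fun x => Set.mem_Ici.mpr (le_max_right _ _))
    exact h1.sub h2
  set S : Set ℝ := Set.Icc 0 t₀ ∩ g ⁻¹' (Set.Ici 0) with hS
  have hScpt : IsCompact S := isCompact_Icc.inter_right (isClosed_Ici.preimage hgc)
  have hS0 : (0:ℝ) ∈ S := by
    refine ⟨⟨le_rfl, ht₀⟩, ?_⟩
    simp only [Set.mem_preimage, Set.mem_Ici, hg, max_self]
    linarith [hY0]
  set τ := sSup S with hτdef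
  have hτS : τ ∈ S := hScpt.sSup_mem ⟨0, hS0⟩
  obtain ⟨⟨hτ0, hτt₀⟩, hτg⟩ := hτS
  have hτZ : Y₂ τ ≤ Y₁ τ := by
    have h : (0:ℝ) ≤ g τ := hτg
    rw [hg] at h
    simp only [max_eq_left hτ0] at h
    linarith
  have hτlt : τ < t₀ := by
    rcases lt_or_eq_of_le hτt₀ with h | h
    · exact h
    · exact absurd hτZ (by rw [h]; exact not_le.mpr hlt)
  have hmem : ∀ s ∈ Set.Ioc τ t₀, Y₁ s < Y₂ s := by
    intro s hs
    by_contra h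
    push_neg at h
    have hs0 : 0 ≤ s := hτ0.trans hs.1.le
    have hsS : s ∈ S := by
      refine ⟨⟨hs0, hs.2⟩, ?_⟩
      simp only [Set.mem_preimage, Set.mem_Ici, hg, max_eq_left hs0]
      linarith
    have hbdd : BddAbove S := ⟨t₀, fun x hx => hx.1.2⟩
    exact absurd (le_csSup hbdd hsS) (not_le.mpr hs.1)
  have hi₁0τ := hint f₁ hcf₁ 0 τ le_rfl hτ0
  have hi₁τt := hint f₁ hcf₁ τ t₀ hτ0 ht₀
  have hi₂0τ := hint f₂ hcf₂ 0 τ le_rfl hτ0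
  have hi₂τt := hint f₂ hcf₂ τ t₀ hτ0 ht₀
  have key : Y₁ t₀ - Y₂ t₀ = (Y₁ τ - Y₂ τ) + (1/2) * ∫ s in τ..t₀, (f₁ s - f₂ s) := by
    have e1 := he₁ t₀ ht₀
    have e1' := he₁ τ hτ0
    have e2 := he₂ t₀ ht₀
    have e2' := he₂ τ hτ0
    have split₁ : ∫ s in (0:ℝ)..t₀, f₁ s = (∫ s in (0:ℝ)..τ, f₁ s) + ∫ s in τ..t₀, f₁ s :=
      (intervalIntegral.integral_add_adjacent_intervals hi₁0τ hi₁τt).symm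
    have split₂ : ∫ s in (0:ℝ)..t₀, f₂ s = (∫ s in (0:ℝ)..τ, f₂ s) + ∫ s in τ..t₀, f₂ s :=
      (intervalIntegral.integral_add_adjacent_intervals hi₂0τ hi₂τt).symm
    have hsub : ∫ s in τ..t₀, (f₁ s - f₂ s) = (∫ s in τ..t₀, f₁ s) - ∫ s in τ..t₀, f₂ s :=
      intervalIntegral.integral_sub hi₁τt hi₂τt
    rw [e1, e2, e1', e2', split₁, split₂, hsub]
    ring
  have hnn : 0 ≤ ∫ s in τ..t₀, (f₁ s - f₂ s) := by
    rw [intervalIntegral.integral_of_le hτlt.le]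
    apply MeasureTheory.setIntegral_nonneg measurableSet_Ioc
    intro s hs
    have h12 := hmem s hs
    have hs0 : 0 ≤ s := hτ0.trans hs.1.le
    have hY₁ := hp₁ s hs0
    have hY₂ := hp₂ s hs0
    have h1 : ε₂ / Y₂ s ≤ ε₁ / Y₁ s := by
      calc ε₂ / Y₂ s ≤ ε₁ / Y₂ s := by gcongr
        _ ≤ ε₁ / Y₁ s := by gcongr; linarith
    have h2 : b * Y₁ s ≤ b * Y₂ s := by nlinarith
    simp only [hf₁, hf₂]
    linarith
  linarith
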